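/- A Nash equilibrium exists and coincides with the maximizers of the sum rate: a feasible profile Q* satisfies R_k(Q*) ≥ R_k(Q_k; Q*_{-k}) for all feasible Q_k and all k if and only if Q* maximizes R(Q) = log det(I + Σ_k H_k Q_k H_k†) over Π_k X_k. -/

import Mathlib

open Matrix
open scoped ComplexOrder

/-- The sum rate `R(Q) = log det(I + Σ_k H_k Q_k H_k†)`. -/
noncomputable def sumRate {N K : ℕ} {Md : Fin K → ℕ}
    (H : ∀ k, Matrix (Fin N) (Fin (Md k)) ℂ)
    (Q : ∀ k, Matrix (Fin (Md k)) (Fin (Md k)) ℂ) : ℝ :=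
  Real.log ((1 + ∑ k, H k * Q k * (H k)ᴴ).det.re)

/-- The multi-user interference covariance `W_{-k} = I + Σ_{ℓ≠k} H_ℓ Q_ℓ H_ℓ†`. -/
noncomputable def mui {N K : ℕ} {Md : Fin K → ℕ}
    (H : ∀ k, Matrix (Fin N) (Fin (Md k)) ℂ)
    (Q : ∀ k, Matrix (Fin (Md k)) (Fin (Md k)) ℂ) (k : Fin K) : Matrix (Fin N) (Fin N) ℂ :=
  1 + ∑ l ∈ Finset.univ.erase k, H l * Q l * (H l)ᴴ

/-- The individual rate `R_k(Q) = log det(W_{-k} + H_k Q_k H_k†) − log det(W_{-k})`. -/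
noncomputable def indRate {N K : ℕ} {Md : Fin K → ℕ}
    (H : ∀ k, Matrix (Fin N) (Fin (Md k)) ℂ)
    (Q : ∀ k, Matrix (Fin (Md k)) (Fin (Md k)) ℂ) (k : Fin K) : ℝ :=
  Real.log ((mui H Q k + H k * Q k * (H k)ᴴ).det.re) - Real.log ((mui H Q k).det.re)

/-- Feasibility of a transmit profile: each `Q_k` is positive semidefinite with trace `P_k`. -/
def Feasible {K : ℕ} {Md : Fin K → ℕ} (P : Fin K → ℝ)
    (Q : ∀ k, Matrix (Fin (Md k)) (Fin (Md k)) ℂ) : Prop :=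
  ∀ k, (Q k).PosSemidef ∧ (Q k).trace = (P k : ℂ)

/-- `Q` is a Nash equilibrium: no user can unilaterally improve his individual rate. -/
def IsNash {N K : ℕ} {Md : Fin K → ℕ}
    (H : ∀ k, Matrix (Fin N) (Fin (Md k)) ℂ) (P : Fin K → ℝ)
    (Q : ∀ k, Matrix (Fin (Md k)) (Fin (Md k)) ℂ) : Prop :=
  ∀ k, ∀ Qk : Matrix (Fin (Md k)) (Fin (Md k)) ℂ,
    Qk.PosSemidef → Qk.trace = (P k : ℂ) →
      indRate H (Function.update Q k Qk) k ≤ indRate H Q k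

open Polynomial


lemma detRe_pos {n : ℕ} {A : Matrix (Fin n) (Fin n) ℂ} (hA : A.PosDef) : 0 < A.det.re :=
  (Complex.lt_def.mp hA.det_pos).1

lemma det_eq_re {n : ℕ} {A : Matrix (Fin n) (Fin n) ℂ} (hA : A.PosDef) : A.det = (A.det.re : ℂ) := by
  have h := (Complex.lt_def.mp hA.det_pos).2
  exact Complex.ext rfl (by simpa using h.symm)

lemma tendsto_aux {c ε : ℝ} {q : ℝ → ℝ} (hq : Continuous q)
    (h : ∀ t ∈ Set.Ioc (0:ℝ) 1, ε ≤ c + t * q t) : ε ≤ c := by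
  have hc : Continuous fun t : ℝ => c + t * q t := by continuity
  have h1 : Filter.Tendsto (fun t : ℝ => c + t * q t) (nhdsWithin 0 (Set.Ioi 0)) (nhds c) := by
    simpa using (hc.tendsto 0).mono_left nhdsWithin_le_nhds
  refine ge_of_tendsto h1 ?_
  filter_upwards [Ioc_mem_nhdsGT_of_mem (Set.left_mem_Ico.mpr one_pos)] with t ht using h t ht

lemma posDef_conj {n : ℕ} {A : Matrix (Fin n) (Fin n) ℂ} (hA : A.PosDef)
    {B : Matrix (Fin n) (Fin n) ℂ} (hB : IsUnit B) : (Bᴴ * A * B).PosDef := by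
  exact hA.conjTranspose_mul_mul_same (Matrix.mulVec_injective_iff_isUnit.mpr hB)

lemma det_affine {n : ℕ} {A : Matrix (Fin n) (Fin n) ℂ} (hA : A.PosDef)
    (B : Matrix (Fin n) (Fin n) ℂ) :
    ∃ q : ℝ → ℝ, Continuous q ∧ ∀ t : ℝ,
      (A + (t:ℂ) • B).det.re
        = A.det.re * (1 + (A⁻¹ * B).trace.re * t + q t * t^2) := by
  set C := A⁻¹ * B with hC
  set p : Polynomial ℂ := ((1 + (X : ℂ[X]) • C.map Polynomial.C).det).divX.divX with hp
  refine ⟨fun t => (p.eval (t:ℂ)).re, ?_, ?_⟩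
  · exact Complex.continuous_re.comp (p.continuous.comp Complex.continuous_ofReal)
  · intro t
    have hAdet : A.det ≠ 0 := hA.det_pos.ne'
    have hdet : A + (t:ℂ) • B = A * (1 + (t:ℂ) • C) := by
      rw [mul_add, mul_one, Matrix.mul_smul, hC, ← Matrix.mul_assoc,
        Matrix.mul_nonsing_inv A (isUnit_iff_ne_zero.mpr hAdet), Matrix.one_mul]
    rw [hdet, Matrix.det_mul, Matrix.det_one_add_smul, det_eq_re hA]
    simp only [Complex.mul_re, Complex.add_re, Complex.add_im, Complex.mul_im, Complex.one_re,
      Complex.one_im, Complex.ofReal_re, Complex.ofReal_im, ← Complex.ofReal_pow]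
    ring

open scoped MatrixOrder in
lemma logdet_concave {n : ℕ} {A A' : Matrix (Fin n) (Fin n) ℂ} (hA : A.PosDef) (hA' : A'.PosDef)
    {t : ℝ} (ht0 : 0 ≤ t) (ht1 : t ≤ 1) :
    (1-t) * Real.log A.det.re + t * Real.log A'.det.re
      ≤ Real.log ((((1-t : ℝ) : ℂ) • A + ((t : ℝ) : ℂ) • A').det.re) := by
  classical
  set S := CFC.sqrt A with hSdef
  have hSH : S.IsHermitian := (CFC.sqrt_nonneg A).posSemidef.1
  have hSS : S * S = A := CFC.sqrt_mul_sqrt_self A hA.posSemidef.nonneg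
  have hdetS : S.det * S.det = A.det := by rw [← Matrix.det_mul, hSS]
  have hSdet : S.det ≠ 0 := by
    intro h; apply hA.det_pos.ne'; rw [← hdetS, h, mul_zero]
  have hSunit : IsUnit S := (Matrix.isUnit_iff_isUnit_det S).mpr (isUnit_iff_ne_zero.mpr hSdet)
  have hSiH : (S⁻¹).IsHermitian := hSH.inv
  have hSinv : S * S⁻¹ = 1 := Matrix.mul_nonsing_inv S (isUnit_iff_ne_zero.mpr hSdet)
  have hSinv' : S⁻¹ * S = 1 := Matrix.nonsing_inv_mul S (isUnit_iff_ne_zero.mpr hSdet)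
  set C := S⁻¹ * A' * S⁻¹ with hCdef
  have hC : C.PosDef := by
    have h : C = (S⁻¹)ᴴ * A' * S⁻¹ := by rw [hSiH.eq]
    rw [h]
    exact posDef_conj hA' (Matrix.isUnit_nonsing_inv_iff.mpr hSunit)
  have hCH : C.IsHermitian := hC.1
  set μ := hCH.eigenvalues with hμ
  set U : Matrix (Fin n) (Fin n) ℂ := (hCH.eigenvectorUnitary : Matrix (Fin n) (Fin n) ℂ) with hUdef
  have hU : U * star U = 1 := Matrix.mem_unitaryGroup_iff.mp (hCH.eigenvectorUnitary).2
  have spec : C = U * Matrix.diagonal (RCLike.ofReal ∘ μ) * star U := hCH.spectral_theorem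
  have hSCS : S * C * S = A' := by
    rw [hCdef]
    simp only [← Matrix.mul_assoc]
    rw [hSinv, Matrix.one_mul, Matrix.mul_assoc, hSinv', Matrix.mul_one]
  have key : ((1-t : ℝ) : ℂ) • A + ((t : ℝ) : ℂ) • A'
      = S * (((1-t : ℝ) : ℂ) • 1 + ((t : ℝ) : ℂ) • C) * S := by
    rw [Matrix.mul_add, Matrix.add_mul, Matrix.mul_smul, Matrix.smul_mul, Matrix.mul_one, hSS,
      Matrix.mul_smul, Matrix.smul_mul, hSCS]
  have hdetcomb : (((1-t : ℝ) : ℂ) • A + ((t : ℝ) : ℂ) • A').det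
      = A.det * (((1-t : ℝ) : ℂ) • 1 + ((t : ℝ) : ℂ) • C).det := by
    rw [key, Matrix.det_mul, Matrix.det_mul, ← hdetS]; ring
  have hdiag : ((1-t : ℝ) : ℂ) • (1 : Matrix (Fin n) (Fin n) ℂ) + ((t : ℝ) : ℂ) • C
      = U * (((1-t : ℝ) : ℂ) • 1 + ((t : ℝ) : ℂ) • Matrix.diagonal (RCLike.ofReal ∘ μ)) * star U := by
    rw [Matrix.mul_add, Matrix.add_mul]
    congr 1
    · rw [Matrix.mul_smul, Matrix.smul_mul, Matrix.mul_one, hU]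
    · rw [Matrix.mul_smul, Matrix.smul_mul, ← spec]
  have hdet2 : (((1-t : ℝ) : ℂ) • 1 + ((t : ℝ) : ℂ) • C).det
      = ∏ i, (((1-t) + t * μ i : ℝ) : ℂ) := by
    rw [hdiag, Matrix.det_mul_right_comm, hU, Matrix.one_mul, ← Matrix.diagonal_one,
      ← Matrix.diagonal_smul, ← Matrix.diagonal_smul, Matrix.diagonal_add, Matrix.det_diagonal]
    refine Finset.prod_congr rfl fun i _ => ?_
    simp only [Pi.add_apply, Pi.smul_apply, Function.comp_apply, smul_eq_mul, Pi.one_apply,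
      mul_one, RCLike.ofReal_alg, Complex.real_smul]
    push_cast
    ring
  have hμpos : ∀ i, 0 < μ i := fun i => hC.eigenvalues_pos i
  have hfac : ∀ i, 0 < (1-t) + t * μ i := by
    intro i
    rcases eq_or_lt_of_le ht1 with h | h
    · subst h; simpa using hμpos i
    · exact add_pos_of_pos_of_nonneg (by linarith) (mul_nonneg ht0 (hμpos i).le)
  have hre : (((1-t : ℝ) : ℂ) • A + ((t : ℝ) : ℂ) • A').det.re
      = A.det.re * ∏ i, ((1-t) + t * μ i) := by
    rw [hdetcomb, hdet2, det_eq_re hA, ← Complex.ofReal_prod, ← Complex.ofReal_mul,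
      Complex.ofReal_re]
    norm_num
  have hSinvdet : S⁻¹.det = S.det⁻¹ := by rw [Matrix.det_nonsing_inv, Ring.inverse_eq_inv']
  have hCdet : C.det = ((A'.det.re / A.det.re : ℝ) : ℂ) := by
    have h1 : C.det = A'.det * (A.det)⁻¹ := by
      rw [hCdef, Matrix.det_mul, Matrix.det_mul, hSinvdet, ← hdetS, mul_inv]; ring
    rw [h1, det_eq_re hA', det_eq_re hA, div_eq_mul_inv]
    norm_num
  have hprod : (∏ i, μ i) = A'.det.re / A.det.re := by
    have h2 := hCH.det_eq_prod_eigenvalues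
    rw [hCdet] at h2
    have h3 : ((A'.det.re / A.det.re : ℝ) : ℂ) = ((∏ i, μ i : ℝ) : ℂ) := by
      rw [h2]; push_cast; rfl
    exact (Complex.ofReal_inj.mp h3).symm
  have hprodpos : 0 < ∏ i, ((1-t) + t * μ i) := Finset.prod_pos fun i _ => hfac i
  rw [hre, Real.log_mul (detRe_pos hA).ne' hprodpos.ne',
    Real.log_prod (fun i _ => (hfac i).ne')]
  have hconc : ∀ i, t * Real.log (μ i) ≤ Real.log ((1-t) + t * μ i) := by
    intro i
    have h := strictConcaveOn_log_Ioi.concaveOn.2 (Set.mem_Ioi.mpr one_pos)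
      (Set.mem_Ioi.mpr (hμpos i)) (by linarith : (0:ℝ) ≤ 1 - t) ht0 (by ring)
    simpa [smul_eq_mul] using h
  have hsum : t * ∑ i, Real.log (μ i) ≤ ∑ i, Real.log ((1-t) + t * μ i) := by
    rw [Finset.mul_sum]
    exact Finset.sum_le_sum fun i _ => hconc i
  have hlogprod : ∑ i, Real.log (μ i) = Real.log A'.det.re - Real.log A.det.re := by
    rw [← Real.log_prod (fun i _ => (hμpos i).ne'), hprod,
      Real.log_div (detRe_pos hA').ne' (detRe_pos hA).ne']
  rw [hlogprod] at hsum
  linarith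

attribute [local instance] Matrix.normedAddCommGroup Matrix.normedSpace

lemma trace_conj_mul_self {m : ℕ} (B : Matrix (Fin m) (Fin m) ℂ) :
    (Bᴴ * B).trace = ((∑ j, ∑ i, Complex.normSq (B i j) : ℝ) : ℂ) := by
  rw [Matrix.trace]
  push_cast
  refine Finset.sum_congr rfl fun j _ => ?_
  rw [Matrix.diag_apply, Matrix.mul_apply]
  refine Finset.sum_congr rfl fun i _ => ?_
  rw [Matrix.conjTranspose_apply]
  exact (Complex.normSq_eq_conj_mul_self).symm

open scoped MatrixOrder in
lemma feasSet_compact {m : ℕ} (p : ℝ) :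
    IsCompact {M : Matrix (Fin m) (Fin m) ℂ | M.PosSemidef ∧ M.trace = (p : ℂ)} := by
  classical
  set T : Set (Matrix (Fin m) (Fin m) ℂ) := {B | (Bᴴ * B).trace = (p : ℂ)} with hT
  have hcontTr : Continuous fun B : Matrix (Fin m) (Fin m) ℂ => (Bᴴ * B).trace :=
    (Continuous.matrix_mul (continuous_id.matrix_conjTranspose) continuous_id).matrix_trace
  have hTclosed : IsClosed T := isClosed_singleton.preimage hcontTr
  have hTbounded : Bornology.IsBounded T := by
    refine (Metric.isBounded_iff_subset_closedBall 0).mpr ⟨Real.sqrt p, fun B hB => ?_⟩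
    have hB' : ((∑ j, ∑ i, Complex.normSq (B i j) : ℝ) : ℂ) = (p : ℂ) := by
      rw [← trace_conj_mul_self]; exact hB
    have hsum : (∑ j, ∑ i, Complex.normSq (B i j) : ℝ) = p := by exact_mod_cast hB'
    simp only [Metric.mem_closedBall, dist_zero_right]
    rw [Matrix.norm_le_iff (Real.sqrt_nonneg p)]
    intro i j
    have hle : Complex.normSq (B i j) ≤ p := by
      rw [← hsum]
      refine Finset.single_le_sum (f := fun j' => ∑ i', Complex.normSq (B i' j'))
        (fun j' _ => Finset.sum_nonneg fun i' _ => Complex.normSq_nonneg _) (Finset.mem_univ j)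
        |>.trans' ?_
      exact Finset.single_le_sum (f := fun i' => Complex.normSq (B i' j)) (fun i' _ => Complex.normSq_nonneg _) (Finset.mem_univ i)
    rw [Complex.norm_def]
    exact Real.sqrt_le_sqrt hle
  haveI : ProperSpace (Matrix (Fin m) (Fin m) ℂ) := FiniteDimensional.proper ℂ _
  have hTcompact : IsCompact T := Metric.isCompact_of_isClosed_isBounded hTclosed hTbounded
  have himg : {M : Matrix (Fin m) (Fin m) ℂ | M.PosSemidef ∧ M.trace = (p : ℂ)}
      = (fun B : Matrix (Fin m) (Fin m) ℂ => Bᴴ * B) '' T := by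
    ext M
    constructor
    · rintro ⟨hpsd, htr⟩
      obtain ⟨B, rfl⟩ : ∃ B : Matrix (Fin m) (Fin m) ℂ, M = Bᴴ * B :=
        ⟨CFC.sqrt M, by rw [(CFC.sqrt_nonneg M).posSemidef.1.eq, CFC.sqrt_mul_sqrt_self M hpsd.nonneg]⟩
      exact ⟨B, htr, rfl⟩
    · rintro ⟨B, hBT, rfl⟩
      exact ⟨Matrix.posSemidef_conjTranspose_mul_self B, hBT⟩
  rw [himg]
  exact hTcompact.image (Continuous.matrix_mul (continuous_id.matrix_conjTranspose) continuous_id)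

section Helpers

lemma posSemidef_real_smul {n : ℕ} {M : Matrix (Fin n) (Fin n) ℂ} (hM : M.PosSemidef)
    {r : ℝ} (hr : 0 ≤ r) : (((r : ℝ) : ℂ) • M).PosSemidef := by
  constructor
  · rw [Matrix.IsHermitian, Matrix.conjTranspose_smul, hM.1.eq]
    congr 1
    simp
  · exact (hM.smul (show (0:ℂ) ≤ (r:ℂ) by exact_mod_cast Complex.zero_le_real.mpr hr)).2


lemma posDef_real_smul {n : ℕ} {M : Matrix (Fin n) (Fin n) ℂ} (hM : M.PosDef)
    {r : ℝ} (hr : 0 < r) : (((r : ℝ) : ℂ) • M).PosDef := by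
  constructor
  · rw [Matrix.IsHermitian, Matrix.conjTranspose_smul, hM.1.eq]
    congr 1
    simp
  · exact (hM.smul (show (0:ℂ) < (r:ℂ) by exact_mod_cast Complex.zero_lt_real.mpr hr)).2

lemma sum_posSemidef {n : ℕ} {ι : Type*} (s : Finset ι) (f : ι → Matrix (Fin n) (Fin n) ℂ)
    (h : ∀ i ∈ s, (f i).PosSemidef) : (∑ i ∈ s, f i).PosSemidef :=
  Finset.sum_induction f _ (fun _ _ ha hb => ha.add hb) Matrix.PosSemidef.zero h

lemma sumMat_posDef {N K : ℕ} {Md : Fin K → ℕ}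
    (H : ∀ k, Matrix (Fin N) (Fin (Md k)) ℂ)
    (Q : ∀ k, Matrix (Fin (Md k)) (Fin (Md k)) ℂ)
    (h : ∀ l, (Q l).PosSemidef) : (1 + ∑ l, H l * Q l * (H l)ᴴ).PosDef :=
  Matrix.PosDef.add_posSemidef Matrix.PosDef.one
    (sum_posSemidef _ _ fun l _ => (h l).mul_mul_conjTranspose_same (H l))

lemma sumMat_split {N K : ℕ} {Md : Fin K → ℕ}
    (H : ∀ k, Matrix (Fin N) (Fin (Md k)) ℂ)
    (Q : ∀ k, Matrix (Fin (Md k)) (Fin (Md k)) ℂ) (k : Fin K) :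
    (1 : Matrix (Fin N) (Fin N) ℂ) + ∑ l, H l * Q l * (H l)ᴴ
      = mui H Q k + H k * Q k * (H k)ᴴ := by
  rw [mui, add_assoc, Finset.sum_erase_add _ _ (Finset.mem_univ k)]

lemma indRate_eq {N K : ℕ} {Md : Fin K → ℕ}
    (H : ∀ k, Matrix (Fin N) (Fin (Md k)) ℂ)
    (Q : ∀ k, Matrix (Fin (Md k)) (Fin (Md k)) ℂ) (k : Fin K) :
    indRate H Q k = sumRate H Q - Real.log ((mui H Q k).det.re) := by
  rw [indRate, sumRate, sumMat_split H Q k]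

lemma mui_update {N K : ℕ} {Md : Fin K → ℕ}
    (H : ∀ k, Matrix (Fin N) (Fin (Md k)) ℂ)
    (Q : ∀ k, Matrix (Fin (Md k)) (Fin (Md k)) ℂ) (k : Fin K)
    (Qk : Matrix (Fin (Md k)) (Fin (Md k)) ℂ) :
    mui H (Function.update Q k Qk) k = mui H Q k := by
  rw [mui, mui]
  congr 1
  refine Finset.sum_congr rfl fun l hl => ?_
  rw [Function.update_of_ne (Finset.ne_of_mem_erase hl)]

lemma isNash_iff {N K : ℕ} {Md : Fin K → ℕ}
    (H : ∀ k, Matrix (Fin N) (Fin (Md k)) ℂ) (P : Fin K → ℝ)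
    (Q : ∀ k, Matrix (Fin (Md k)) (Fin (Md k)) ℂ) :
    IsNash H P Q ↔ ∀ k, ∀ Qk : Matrix (Fin (Md k)) (Fin (Md k)) ℂ,
      Qk.PosSemidef → Qk.trace = (P k : ℂ) →
        sumRate H (Function.update Q k Qk) ≤ sumRate H Q := by
  unfold IsNash
  refine forall_congr' fun k => forall_congr' fun Qk =>
    imp_congr_right fun _ => imp_congr_right fun _ => ?_
  rw [indRate_eq, indRate_eq, mui_update, sub_le_sub_iff_right]

lemma feasible_update {K : ℕ} {Md : Fin K → ℕ} {P : Fin K → ℝ}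
    {Q : ∀ k, Matrix (Fin (Md k)) (Fin (Md k)) ℂ} (hQ : Feasible P Q) {k : Fin K}
    {Qk : Matrix (Fin (Md k)) (Fin (Md k)) ℂ} (h1 : Qk.PosSemidef)
    (h2 : Qk.trace = (P k : ℂ)) : Feasible P (Function.update Q k Qk) := by
  intro l
  by_cases hl : l = k
  · subst hl; rw [Function.update_self]; exact ⟨h1, h2⟩
  · rw [Function.update_of_ne hl]; exact hQ l

end Helpers

section NashToMax

variable {N K : ℕ} {Md : Fin K → ℕ}

lemma nash_to_max (H : ∀ k, Matrix (Fin N) (Fin (Md k)) ℂ) (P : Fin K → ℝ)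
    {Qs Q' : ∀ k, Matrix (Fin (Md k)) (Fin (Md k)) ℂ}
    (hQs : Feasible P Qs) (hQ' : Feasible P Q')
    (hN : ∀ k, ∀ Qk : Matrix (Fin (Md k)) (Fin (Md k)) ℂ,
      Qk.PosSemidef → Qk.trace = (P k : ℂ) →
        sumRate H (Function.update Qs k Qk) ≤ sumRate H Qs) :
    sumRate H Q' ≤ sumRate H Qs := by
  classical
  set Sl : ∀ k : Fin K, Matrix (Fin N) (Fin N) ℂ := fun l => H l * Qs l * (H l)ᴴ with hSl
  set Sl' : ∀ k : Fin K, Matrix (Fin N) (Fin N) ℂ := fun l => H l * Q' l * (H l)ᴴ with hSl'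
  set A : Matrix (Fin N) (Fin N) ℂ := 1 + ∑ l, Sl l with hAdef
  set A' : Matrix (Fin N) (Fin N) ℂ := 1 + ∑ l, Sl' l with hA'def
  have hApd : A.PosDef := sumMat_posDef H Qs fun l => (hQs l).1
  have hA'pd : A'.PosDef := sumMat_posDef H Q' fun l => (hQ' l).1
  have hsumQs : sumRate H Qs = Real.log A.det.re := rfl
  have hsumQ' : sumRate H Q' = Real.log A'.det.re := rfl
  -- the interpolated strategies
  set Qt : ∀ k : Fin K, ℝ → Matrix (Fin (Md k)) (Fin (Md k)) ℂ :=
    fun k t => ((1 - t : ℝ) : ℂ) • Qs k + ((t : ℝ) : ℂ) • Q' k with hQt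
  have hQtPsd : ∀ k, ∀ t ∈ Set.Icc (0:ℝ) 1, (Qt k t).PosSemidef := by
    rintro k t ⟨ht0, ht1⟩
    exact (posSemidef_real_smul (hQs k).1 (by linarith)).add (posSemidef_real_smul (hQ' k).1 ht0)
  have hQtTr : ∀ k, ∀ t : ℝ, (Qt k t).trace = (P k : ℂ) := by
    intro k t
    rw [hQt]
    simp only [Matrix.trace_add, Matrix.trace_smul, (hQs k).2, (hQ' k).2, smul_eq_mul]
    push_cast
    ring
  -- the interpolated matrix identity
  have hup : ∀ (k : Fin K) (t : ℝ),
      (1 : Matrix (Fin N) (Fin N) ℂ) + ∑ l, H l * (Function.update Qs k (Qt k t)) l * (H l)ᴴ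
        = A + ((t : ℝ) : ℂ) • (Sl' k - Sl k) := by
    intro k t
    have hsum : ∑ l, H l * (Function.update Qs k (Qt k t)) l * (H l)ᴴ
        = (∑ l ∈ Finset.univ.erase k, Sl l) + H k * (Qt k t) * (H k)ᴴ := by
      rw [← Finset.sum_erase_add _ _ (Finset.mem_univ k), Function.update_self]
      congr 1
      refine Finset.sum_congr rfl fun l hl => ?_
      rw [Function.update_of_ne (Finset.ne_of_mem_erase hl), hSl]
    have hQtH : H k * (Qt k t) * (H k)ᴴ
        = ((1 - t : ℝ) : ℂ) • Sl k + ((t : ℝ) : ℂ) • Sl' k := by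
      rw [hQt, hSl, hSl']
      simp only [Matrix.mul_add, Matrix.add_mul, Matrix.mul_smul, Matrix.smul_mul]
    have hAsplit : A = 1 + ((∑ l ∈ Finset.univ.erase k, Sl l) + Sl k) := by
      rw [hAdef, Finset.sum_erase_add _ _ (Finset.mem_univ k)]
    rw [hsum, hQtH, hAsplit]
    push_cast
    rw [smul_sub, sub_smul, one_smul]
    abel
  -- PD of interpolates
  have hpdt : ∀ (k : Fin K), ∀ t ∈ Set.Icc (0:ℝ) 1,
      (A + ((t : ℝ) : ℂ) • (Sl' k - Sl k)).PosDef := by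
    intro k t ht
    rw [← hup k t]
    refine sumMat_posDef H _ fun l => ?_
    by_cases hl : l = k
    · subst hl; rw [Function.update_self]; exact hQtPsd l t ht
    · rw [Function.update_of_ne hl]; exact (hQs l).1
  -- Nash inequality in determinant form
  have hNt : ∀ (k : Fin K), ∀ t ∈ Set.Icc (0:ℝ) 1,
      (A + ((t : ℝ) : ℂ) • (Sl' k - Sl k)).det.re ≤ A.det.re := by
    intro k t ht
    have h1 := hN k (Qt k t) (hQtPsd k t ht) (hQtTr k t)
    rw [hsumQs] at h1
    have h2 : sumRate H (Function.update Qs k (Qt k t))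
        = Real.log ((A + ((t : ℝ) : ℂ) • (Sl' k - Sl k)).det.re) := by
      rw [sumRate, hup k t]
    rw [h2] at h1
    exact (Real.log_le_log_iff (detRe_pos (hpdt k t ht)) (detRe_pos hApd)).mp h1
  -- directional derivative of each coordinate is nonpositive
  have hτk : ∀ k : Fin K, (A⁻¹ * (Sl' k - Sl k)).trace.re ≤ 0 := by
    intro k
    obtain ⟨q, hqc, hq⟩ := det_affine hApd (Sl' k - Sl k)
    have key : ∀ t ∈ Set.Ioc (0:ℝ) 1,
        (0:ℝ) ≤ -(A⁻¹ * (Sl' k - Sl k)).trace.re + t * (-(q t)) := by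
      rintro t ⟨ht0, ht1⟩
      by_contra hcon
      push_neg at hcon
      have hpos : 0 < (A⁻¹ * (Sl' k - Sl k)).trace.re + t * q t := by linarith
      have h1 := hNt k t ⟨ht0.le, ht1⟩
      rw [hq t] at h1
      have hd := detRe_pos hApd
      nlinarith [mul_pos hd (mul_pos ht0 hpos)]
    have := tendsto_aux (ε := 0) (c := -(A⁻¹ * (Sl' k - Sl k)).trace.re)
      (q := fun t => -(q t)) hqc.neg key
    linarith
  have hABA : A' - A = ∑ k, (Sl' k - Sl k) := by
    rw [hAdef, hA'def, Finset.sum_sub_distrib]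
    abel
  have hτ : (A⁻¹ * (A' - A)).trace.re ≤ 0 := by
    rw [hABA, Finset.mul_sum, Matrix.trace_sum, Complex.re_sum]
    exact Finset.sum_nonpos fun k _ => hτk k
  by_contra hcon
  push_neg at hcon
  rw [hsumQs, hsumQ'] at hcon
  have hεpos : 0 < Real.log A'.det.re - Real.log A.det.re := by linarith
  obtain ⟨q, hqc, hq⟩ := det_affine hApd (A' - A)
  have hkey : ∀ t ∈ Set.Ioc (0:ℝ) 1, Real.log A'.det.re - Real.log A.det.re
      ≤ (A⁻¹ * (A' - A)).trace.re + t * q t := by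
    rintro t ⟨ht0, ht1⟩
    have hmid : A + ((t : ℝ) : ℂ) • (A' - A) = ((1 - t : ℝ) : ℂ) • A + ((t : ℝ) : ℂ) • A' := by
      push_cast
      rw [smul_sub, sub_smul, one_smul]
      abel
    have hpdmid : (((1 - t : ℝ) : ℂ) • A + ((t : ℝ) : ℂ) • A').PosDef :=
      Matrix.PosDef.posSemidef_add (posSemidef_real_smul hApd.posSemidef (by linarith))
        (posDef_real_smul hA'pd ht0)
    have hconc := logdet_concave hApd hA'pd ht0.le ht1
    have h1 : Real.log A.det.re + t * (Real.log A'.det.re - Real.log A.det.re)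
        ≤ Real.log ((A + ((t : ℝ) : ℂ) • (A' - A)).det.re) := by
      rw [hmid]
      nlinarith [hconc]
    have hgpos : 0 < (A + ((t : ℝ) : ℂ) • (A' - A)).det.re := by
      rw [hmid]; exact detRe_pos hpdmid
    have h2 : A.det.re * Real.exp (t * (Real.log A'.det.re - Real.log A.det.re))
        ≤ (A + ((t : ℝ) : ℂ) • (A' - A)).det.re := by
      have h3 := Real.exp_le_exp.mpr h1
      rwa [Real.exp_add, Real.exp_log (detRe_pos hApd), Real.exp_log hgpos] at h3
    rw [hq t] at h2
    have hexp := Real.add_one_le_exp (t * (Real.log A'.det.re - Real.log A.det.re))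
    have h3 : A.det.re * (1 + t * (Real.log A'.det.re - Real.log A.det.re))
        ≤ A.det.re * Real.exp (t * (Real.log A'.det.re - Real.log A.det.re)) :=
      mul_le_mul_of_nonneg_left (by linarith) (detRe_pos hApd).le
    have hd := detRe_pos hApd
    have h4 : A.det.re * (t * (Real.log A'.det.re - Real.log A.det.re))
        ≤ A.det.re * (t * ((A⁻¹ * (A' - A)).trace.re + t * q t)) := by nlinarith
    have h5 := (mul_le_mul_iff_right₀ hd).mp h4
    exact (mul_le_mul_iff_right₀ ht0).mp h5
  have := tendsto_aux hqc hkey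
  linarith

end NashToMax


/-- A Nash equilibrium exists, and the Nash equilibria coincide with the maximizers of the
sum rate over the product of the feasible sets. -/
theorem nash_exists_and_iff_sumRate_max {N K : ℕ} {Md : Fin K → ℕ}
    (H : ∀ k, Matrix (Fin N) (Fin (Md k)) ℂ)
    (P : Fin K → ℝ) (hP : ∀ k, 0 < P k) (hMd : ∀ k, 0 < Md k) :
    (∃ Qs : ∀ k, Matrix (Fin (Md k)) (Fin (Md k)) ℂ, Feasible P Qs ∧ IsNash H P Qs) ∧
    (∀ Qs : ∀ k, Matrix (Fin (Md k)) (Fin (Md k)) ℂ, Feasible P Qs →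
      (IsNash H P Qs ↔ ∀ Q', Feasible P Q' → sumRate H Q' ≤ sumRate H Qs)) := by
  classical
  have part2 : ∀ Qs : ∀ k, Matrix (Fin (Md k)) (Fin (Md k)) ℂ, Feasible P Qs →
      (IsNash H P Qs ↔ ∀ Q', Feasible P Q' → sumRate H Q' ≤ sumRate H Qs) := by
    intro Qs hQs
    rw [isNash_iff]
    constructor
    · intro hN Q' hQ'
      exact nash_to_max H P hQs hQ' hN
    · intro hmax k Qk h1 h2
      exact hmax _ (feasible_update hQs h1 h2)
  refine ⟨?_, part2⟩
  set F : Set (∀ k, Matrix (Fin (Md k)) (Fin (Md k)) ℂ) := {Q | Feasible P Q} with hF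
  have hFeq : F = Set.univ.pi (fun k =>
      {M : Matrix (Fin (Md k)) (Fin (Md k)) ℂ | M.PosSemidef ∧ M.trace = (P k : ℂ)}) := by
    ext Q
    simp [hF, Feasible, Set.mem_pi]
  have hFc : IsCompact F := by
    rw [hFeq]
    exact isCompact_univ_pi fun k => feasSet_compact (P k)
  have hFne : F.Nonempty := by
    refine ⟨fun k => ((P k / (Md k : ℝ) : ℝ) : ℂ) • 1, fun k => ⟨?_, ?_⟩⟩
    · exact posSemidef_real_smul Matrix.PosSemidef.one
        (div_nonneg (hP k).le (Nat.cast_nonneg _))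
    · rw [Matrix.trace_smul, Matrix.trace_one, smul_eq_mul]
      have hMd' : ((Md k : ℕ) : ℂ) ≠ 0 := Nat.cast_ne_zero.mpr (hMd k).ne'
      push_cast
      rw [Fintype.card_fin, div_mul_cancel₀ _ hMd']
  have hg : Continuous fun Q : (∀ k, Matrix (Fin (Md k)) (Fin (Md k)) ℂ) =>
      ((1 + ∑ k, H k * Q k * (H k)ᴴ).det.re) := by
    refine Complex.continuous_re.comp ?_
    refine Continuous.matrix_det ?_
    refine Continuous.add continuous_const ?_
    refine continuous_finset_sum _ fun k _ => ?_
    exact (continuous_const.matrix_mul (continuous_apply k)).matrix_mul continuous_const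
  have hcont : ContinuousOn (sumRate H) F := by
    refine Real.continuousOn_log.comp hg.continuousOn ?_
    intro Q hQ
    simp only [Set.mem_compl_iff, Set.mem_singleton_iff]
    exact (detRe_pos (sumMat_posDef H Q fun l => (hQ l).1)).ne'
  obtain ⟨Qmax, hQmaxF, hmax⟩ := hFc.exists_isMaxOn hFne hcont
  exact ⟨Qmax, hQmaxF, (part2 Qmax hQmaxF).mpr fun Q' hQ' => hmax hQ'⟩
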